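/- Let p and q be distinct prime numbers, let a ≥ 1 and b ≥ 1 be integers, and let S be a finite multiset of positive integers. Then lcm of the multiset S + {p^a · q^b} equals lcm of the multiset S + {p^a, q^b}, and B(S + {p^a · q^b}) < B(S + {p^a, q^b}), where S + T denotes the multiset obtained by adjoining the elements of T to S. -/

import Mathlib

/-- `B S` for a finite multiset `S` of positive integers:
`lcm(S) * (24 - ∑_{r ∈ S} (r - 1/r))`, computed in `ℚ`. -/
def B (S : Multiset ℕ) : ℚ :=
  (S.lcm : ℚ) * (24 - (S.map (fun r => (r : ℚ) - 1 / r)).sum)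

lemma B_eq' (S : Multiset ℕ) :
    B S = (S.lcm : ℚ) * (24 - (Multiset.map (fun r : ℕ => ((r:ℚ) - 1/(r:ℚ))) S).sum) := by
  unfold B
  congr 2
  rw [show (do
      let a ← S
      pure ((a:ℕ):ℚ) : Multiset ℚ) = S.map (fun a : ℕ => (a:ℚ)) from Multiset.bind_singleton S _,
    Multiset.map_map]
  rfl

lemma lcm_pos_of_pos' (S : Multiset ℕ) (hS : ∀ x ∈ S, 0 < x) : 0 < S.lcm := by
  induction S using Multiset.induction with
  | empty => simp [Multiset.lcm_zero]
  | cons a s ih =>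
    rw [Multiset.lcm_cons]
    exact Nat.lcm_pos (hS a (Multiset.mem_cons_self a s))
      (ih fun x hx => hS x (Multiset.mem_cons_of_mem hx))

theorem stmt_2 (p q : ℕ) (hp : p.Prime) (hq : q.Prime) (hpq : p ≠ q)
    (a b : ℕ) (ha : 1 ≤ a) (hb : 1 ≤ b)
    (S : Multiset ℕ) (hS : ∀ x ∈ S, 0 < x) :
    (S + {p ^ a * q ^ b}).lcm = (S + {p ^ a, q ^ b}).lcm ∧
      B (S + {p ^ a * q ^ b}) < B (S + {p ^ a, q ^ b}) := by
  have hcop : Nat.Coprime (p ^ a) (q ^ b) :=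
    Nat.Coprime.pow a b ((Nat.coprime_primes hp hq).mpr hpq)
  have hlcm : Nat.lcm (p ^ a) (q ^ b) = p ^ a * q ^ b := hcop.lcm_eq_mul
  have hs1 : ({p ^ a * q ^ b} : Multiset ℕ).lcm = p ^ a * q ^ b := by simp
  have hs2 : ({p ^ a, q ^ b} : Multiset ℕ).lcm = p ^ a * q ^ b := by
    simp [Multiset.lcm_cons, Multiset.lcm_singleton, lcm_eq_nat_lcm, hlcm]
  have hL : (S + {p ^ a * q ^ b}).lcm = (S + {p ^ a, q ^ b}).lcm := by
    rw [Multiset.lcm_add, Multiset.lcm_add, hs1, hs2]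
  refine ⟨hL, ?_⟩
  have hx : 2 ≤ p ^ a := le_trans hp.two_le (Nat.le_self_pow (by omega) p)
  have hy : 2 ≤ q ^ b := le_trans hq.two_le (Nat.le_self_pow (by omega) q)
  have hLpos : 0 < (S + {p ^ a * q ^ b}).lcm := by
    apply lcm_pos_of_pos'
    intro x hx'
    rcases Multiset.mem_add.mp hx' with h | h
    · exact hS x h
    · simp at h; subst h; positivity
  rw [B_eq', B_eq', hL]
  have hLQ : (0:ℚ) < ((S + {p ^ a, q ^ b}).lcm : ℚ) := by
    rw [← hL]; exact_mod_cast hLpos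
  apply mul_lt_mul_of_pos_left _ hLQ
  apply sub_lt_sub_left
  rw [Multiset.map_add, Multiset.map_add, Multiset.sum_add, Multiset.sum_add]
  apply (add_lt_add_iff_left _).mpr
  have e1 : (Multiset.map (fun r : ℕ => (r : ℚ) - 1 / (r:ℚ)) ({p ^ a * q ^ b} : Multiset ℕ)).sum
      = ((p ^ a * q ^ b : ℕ) : ℚ) - 1 / ((p ^ a * q ^ b : ℕ) : ℚ) := by
    simp
  have e2 : (Multiset.map (fun r : ℕ => (r : ℚ) - 1 / (r:ℚ)) ({p ^ a, q ^ b} : Multiset ℕ)).sum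
      = (((p ^ a : ℕ) : ℚ) - 1 / ((p ^ a : ℕ) : ℚ))
        + (((q ^ b : ℕ) : ℚ) - 1 / ((q ^ b : ℕ) : ℚ)) := by
    show (Multiset.map _ (p ^ a ::ₘ ({q ^ b} : Multiset ℕ))).sum = _
    simp
  rw [e1, e2]
  push_cast
  set x : ℚ := ((p : ℚ) ^ a) with hxdef
  set y : ℚ := ((q : ℚ) ^ b) with hydef
  have hx2 : (2:ℚ) ≤ x := by rw [hxdef]; exact_mod_cast hx
  have hy2 : (2:ℚ) ≤ y := by rw [hydef]; exact_mod_cast hy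
  have hxpos : (0:ℚ) < x := by linarith
  have hypos : (0:ℚ) < y := by linarith
  have hxy : x + y ≤ x * y := by nlinarith
  have hinv : 1 / (x * y) < 1 / x + 1 / y := by
    rw [div_add_div _ _ (ne_of_gt hxpos) (ne_of_gt hypos),
      div_lt_div_iff₀ (by positivity) (by positivity)]
    nlinarith
  linarith
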